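/- arXiv:2402.15842 — 2 statements merged into one kernel-verified Lean document; each statement's English description precedes it below -/
import Mathlib

section
/- Let n ≥ 2 and let h_n = f_{1/n} * f_{2/n} * ⋯ * f_{(n-1)/n}, where f_β(t) = t^(β-1)·1_{t>0}. Then h_n * h_n = ((2π)^(n-1)/n) · f_1^{*(n-1)}, where f_1^{*(n-1)}(t) = t^(n-2)/(n-2)! for t > 0. -/
/-- Convolution of functions supported on the positive reals. -/
noncomputable def conv (f g : ℝ → ℝ) : ℝ → ℝ := fun t => ∫ τ in (0:ℝ)..t, f τ * g (t - τ)

/-- `fp α t = t^(α-1)` for `t > 0`, and `0` otherwise. -/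
noncomputable def fp (α : ℝ) : ℝ → ℝ := fun t => if 0 < t then t ^ (α - 1) else 0

/-- Convolution `fp (α 0) * fp (α 1) * ⋯ * fp (α n)` of `n+1` power functions. -/
noncomputable def multiConv : (n : ℕ) → (Fin (n + 1) → ℝ) → (ℝ → ℝ)
  | 0, α => fp (α 0)
  | n + 1, α => conv (fp (α 0)) (multiConv n (fun i => α i.succ))

/-- With `n = m + 2`, `hconv m = f_{1/n} * f_{2/n} * ⋯ * f_{(n-1)/n}`. -/
noncomputable def hconv (m : ℕ) : ℝ → ℝ :=
  multiConv m (fun i : Fin (m + 1) => ((i : ℕ) + 1 : ℝ) / ((m : ℝ) + 2))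


open MeasureTheory Real Finset

lemma fp_nonpos {a t : ℝ} (ht : t ≤ 0) : fp a t = 0 := by
  simp [fp, not_lt.mpr ht]

lemma conv_fp {a b : ℝ} (ha : 0 < a) (hb : 0 < b) :
    conv (fp a) (fp b) = fun t => (Real.Gamma a * Real.Gamma b / Real.Gamma (a + b)) * fp (a + b) t := by
  funext t
  rcases le_or_gt t 0 with ht | ht
  · have : conv (fp a) (fp b) t = 0 := by
      rw [conv, intervalIntegral.integral_congr (g := fun _ => (0:ℝ)), intervalIntegral.integral_zero]
      intro τ hτ
      rw [Set.uIcc_of_ge ht] at hτ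
      simp [fp_nonpos hτ.2]
    rw [this, fp_nonpos ht, mul_zero]
  · have hβ : Complex.betaIntegral a b
        = ((Real.Gamma a * Real.Gamma b / Real.Gamma (a + b) : ℝ) : ℂ) := by
      have h1 := Complex.Gamma_mul_Gamma_eq_betaIntegral (s := (a:ℂ)) (t := (b:ℂ))
        (by simpa using ha) (by simpa using hb)
      have h2 : ((a:ℂ) + (b:ℂ)) = ((a + b : ℝ) : ℂ) := by push_cast; ring
      rw [h2, Complex.Gamma_ofReal, Complex.Gamma_ofReal, Complex.Gamma_ofReal] at h1
      have h3 : Real.Gamma (a + b) ≠ 0 := (Real.Gamma_pos_of_pos (by linarith)).ne'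
      rw [eq_comm, Complex.ofReal_div, Complex.ofReal_mul, div_eq_iff (by exact_mod_cast h3), h1]
      ring
    have key := Complex.betaIntegral_scaled (a : ℂ) (b : ℂ) ht
    have hB : (∫ x in (0:ℝ)..t, (x:ℂ) ^ ((a:ℂ) - 1) * ((t:ℂ) - x) ^ ((b:ℂ) - 1))
        = ((conv (fp a) (fp b) t : ℝ) : ℂ) := by
      rw [conv, ← intervalIntegral.integral_ofReal]
      rw [intervalIntegral.integral_of_le ht.le, intervalIntegral.integral_of_le ht.le,
        MeasureTheory.integral_Ioc_eq_integral_Ioo, MeasureTheory.integral_Ioc_eq_integral_Ioo]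
      refine setIntegral_congr_fun measurableSet_Ioo fun x hx => ?_
      have hx0 : (0:ℝ) < x := hx.1
      have hxt : x < t := hx.2
      rw [fp, fp, if_pos hx0, if_pos (by linarith : (0:ℝ) < t - x)]
      push_cast
      rw [Complex.ofReal_cpow hx0.le, Complex.ofReal_cpow (by linarith : (0:ℝ) ≤ t - x)]
      push_cast
      ring
    rw [hB, hβ] at key
    have hT : ((t:ℂ)) ^ ((a:ℂ) + (b:ℂ) - 1) = ((t ^ (a + b - 1) : ℝ) : ℂ) := by
      rw [Complex.ofReal_cpow ht.le]
      push_cast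
      ring_nf
    rw [hT, ← Complex.ofReal_mul] at key
    have := Complex.ofReal_injective key
    rw [this, fp, if_pos ht]
    ring

lemma conv_const_mul_right (c : ℝ) (f g : ℝ → ℝ) :
    conv f (fun t => c * g t) = fun t => c * conv f g t := by
  funext t
  rw [conv, conv, ← intervalIntegral.integral_const_mul]
  exact intervalIntegral.integral_congr fun τ _ => by ring

lemma conv_const_mul_left (c : ℝ) (f g : ℝ → ℝ) :
    conv (fun t => c * f t) g = fun t => c * conv f g t := by
  funext t
  rw [conv, conv, ← intervalIntegral.integral_const_mul]
  exact intervalIntegral.integral_congr fun τ _ => by ring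

lemma multiConv_eq (n : ℕ) (α : Fin (n + 1) → ℝ) (hα : ∀ i, 0 < α i) :
    multiConv n α = fun t =>
      ((∏ i, Real.Gamma (α i)) / Real.Gamma (∑ i, α i)) * fp (∑ i, α i) t := by
  induction n with
  | zero =>
    simp only [multiConv, Fin.sum_univ_succ, Fin.sum_univ_zero, Fin.prod_univ_succ,
      Fin.prod_univ_zero, add_zero, mul_one]
    funext t
    rw [div_self (Real.Gamma_pos_of_pos (hα 0)).ne', one_mul]
  | succ n ih =>
    have hS' : 0 < ∑ i : Fin (n+1), α i.succ := Finset.sum_pos (fun i _ => hα i.succ) Finset.univ_nonempty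
    rw [multiConv, ih (fun i : Fin (n+1) => α i.succ) (fun i => hα i.succ), conv_const_mul_right,
      conv_fp (hα 0) hS']
    funext t
    rw [show (∑ i : Fin (n+1+1), α i) = α 0 + ∑ i : Fin (n+1), α i.succ from Fin.sum_univ_succ α,
      show (∏ i : Fin (n+1+1), Real.Gamma (α i))
          = Real.Gamma (α 0) * ∏ i : Fin (n+1), Real.Gamma (α i.succ) from
        Fin.prod_univ_succ fun i => Real.Gamma (α i)]
    have h1 : Real.Gamma (∑ i : Fin (n+1), α i.succ) ≠ 0 := (Real.Gamma_pos_of_pos hS').ne'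
    have h2 : Real.Gamma (α 0 + ∑ i : Fin (n+1), α i.succ) ≠ 0 :=
      (Real.Gamma_pos_of_pos (by have := hα 0; linarith)).ne'
    field_simp

lemma one_sub_exp_eq (x : ℝ) :
    1 - Complex.exp (x * Complex.I) =
      ((2 * Real.sin (x / 2) : ℝ) : ℂ) * (-Complex.I * Complex.exp (((x / 2 : ℝ) : ℂ) * Complex.I)) := by
  have h1 : Real.sin x = 2 * Real.sin (x / 2) * Real.cos (x / 2) := by
    rw [← Real.sin_two_mul]; congr 1; ring
  have h2 : Real.cos x = 1 - 2 * Real.sin (x / 2) ^ 2 := by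
    have h := Real.sin_sq_eq_half_sub (x / 2)
    rw [show 2 * (x / 2) = x by ring] at h
    linarith
  rw [Complex.exp_mul_I, Complex.exp_mul_I]
  simp only [← Complex.ofReal_cos, ← Complex.ofReal_sin]
  rw [h1, h2]
  push_cast
  linear_combination (2 * Complex.sin ((x : ℂ) / 2) ^ 2) * Complex.I_sq

lemma sum_range_real (m : ℕ) :
    (∑ k ∈ Finset.range (m + 1), ((k : ℝ) + 1)) = ((m : ℝ) + 1) * ((m : ℝ) + 2) / 2 := by
  induction m with
  | zero => norm_num
  | succ n ih =>
    rw [Finset.sum_range_succ, ih]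
    push_cast
    ring

lemma prod_two_sin (m : ℕ) :
    ∏ k ∈ Finset.range (m + 1), (2 * Real.sin (π * (k + 1) / (m + 2))) = (m : ℝ) + 2 := by
  have h2 : ((m : ℝ) + 2) ≠ 0 := by positivity
  have hcast : ((m + 2 : ℕ) : ℂ) = (m : ℂ) + 2 := by push_cast; ring
  have hμ : IsPrimitiveRoot (Complex.exp (2 * π * Complex.I / ((m : ℂ) + 2))) (m + 1 + 1) := by
    rw [← hcast]
    exact Complex.isPrimitiveRoot_exp _ (by omega)
  have hp := hμ.prod_one_sub_pow_eq_order
  -- rewrite each factor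
  have hfac : ∀ k ∈ Finset.range (m + 1),
      1 - Complex.exp (2 * π * Complex.I / ((m : ℂ) + 2)) ^ (k + 1) =
        ((2 * Real.sin (π * (k + 1) / (m + 2)) : ℝ) : ℂ) *
          Complex.exp (((π * (k + 1) / (m + 2) - π / 2 : ℝ) : ℂ) * Complex.I) := by
    intro k _
    have e1 : Complex.exp (2 * π * Complex.I / (m + 2)) ^ (k + 1) =
        Complex.exp (((2 * π * (k + 1) / (m + 2) : ℝ) : ℂ) * Complex.I) := by
      rw [← Complex.exp_nat_mul]
      congr 1
      push_cast
      ring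
    rw [e1, one_sub_exp_eq]
    have e2 : (2 * π * (k + 1) / (m + 2)) / 2 = π * (k + 1) / (m + 2) := by ring
    rw [e2]
    have e3 : -Complex.I = Complex.exp (((-(π / 2) : ℝ) : ℂ) * Complex.I) := by
      rw [Complex.exp_mul_I, ← Complex.ofReal_cos, ← Complex.ofReal_sin]
      simp
    rw [e3, ← Complex.exp_add]
    congr 2
    push_cast
    ring
  rw [Finset.prod_congr rfl hfac, Finset.prod_mul_distrib, ← Complex.exp_sum] at hp
  have hsum : ∑ k ∈ Finset.range (m + 1), ((π * (k + 1) / (m + 2) - π / 2 : ℝ) : ℂ) * Complex.I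
      = 0 := by
    rw [← Finset.sum_mul, ← Complex.ofReal_sum]
    have hN := sum_range_real m
    have : ∑ k ∈ Finset.range (m + 1), (π * (k + 1) / (m + 2) - π / 2 : ℝ) = 0 := by
      rw [Finset.sum_sub_distrib]
      simp only [Finset.sum_const, Finset.card_range, nsmul_eq_mul]
      have : ∑ k ∈ Finset.range (m + 1), (π * (k + 1) / (m + 2) : ℝ)
          = (π / (m + 2)) * ∑ k ∈ Finset.range (m + 1), ((k : ℝ) + 1) := by
        rw [Finset.mul_sum]
        exact Finset.sum_congr rfl fun k _ => by push_cast; ring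
      rw [this, hN]
      field_simp
      push_cast
      ring
    rw [this]
    simp
  rw [hsum, Complex.exp_zero, mul_one] at hp
  have := hp
  rw [← Complex.ofReal_prod] at this
  have hr : (∏ k ∈ Finset.range (m + 1), (2 * Real.sin (π * (k + 1) / (m + 2)))) = ((m : ℝ) + 1 + 1) := by
    exact_mod_cast this
  rw [hr]; ring

lemma gamma_prod_sq (m : ℕ) :
    (∏ k ∈ Finset.range (m + 1), Real.Gamma (((k : ℝ) + 1) / ((m : ℝ) + 2))) ^ 2 =
      (2 * π) ^ (m + 1) / ((m : ℝ) + 2) := by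
  have hm2 : (0:ℝ) < (m : ℝ) + 2 := by positivity
  have hsin : ∀ k ∈ Finset.range (m + 1),
      0 < Real.sin (π * (((k : ℝ) + 1) / ((m : ℝ) + 2))) := by
    intro k hk
    have hk' : (k : ℝ) + 1 < (m : ℝ) + 2 := by
      have := Finset.mem_range.mp hk
      push_cast
      exact_mod_cast by omega
    refine Real.sin_pos_of_pos_of_lt_pi (by positivity) ?_
    have h1 : ((k : ℝ) + 1) / ((m : ℝ) + 2) < 1 := (div_lt_one hm2).mpr hk'
    nlinarith [Real.pi_pos]
  have hrefl : (∏ k ∈ Finset.range (m + 1), Real.Gamma (((k : ℝ) + 1) / ((m : ℝ) + 2))) =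
      ∏ k ∈ Finset.range (m + 1), Real.Gamma (1 - ((k : ℝ) + 1) / ((m : ℝ) + 2)) := by
    rw [← Finset.prod_range_reflect (fun k => Real.Gamma (((k : ℝ) + 1) / ((m : ℝ) + 2))) (m + 1)]
    refine Finset.prod_congr rfl fun k hk => ?_
    have hk' : k ≤ m := Nat.lt_succ_iff.mp (Finset.mem_range.mp hk)
    congr 1
    rw [Nat.add_sub_cancel, Nat.cast_sub hk']
    field_simp
    ring
  have h1 : (∏ k ∈ Finset.range (m + 1), Real.Gamma (((k : ℝ) + 1) / ((m : ℝ) + 2))) ^ 2 =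
      ∏ k ∈ Finset.range (m + 1),
        (Real.Gamma (((k : ℝ) + 1) / ((m : ℝ) + 2)) *
          Real.Gamma (1 - ((k : ℝ) + 1) / ((m : ℝ) + 2))) := by
    rw [Finset.prod_mul_distrib, ← hrefl, sq]
  have h2 : (∏ k ∈ Finset.range (m + 1), Real.Gamma (((k : ℝ) + 1) / ((m : ℝ) + 2))) ^ 2 =
      ∏ k ∈ Finset.range (m + 1), (π / Real.sin (π * (((k : ℝ) + 1) / ((m : ℝ) + 2)))) := by
    rw [h1]
    exact Finset.prod_congr rfl fun k _ => Real.Gamma_mul_Gamma_one_sub _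
  have h3 : (∏ k ∈ Finset.range (m + 1), (π / Real.sin (π * (((k : ℝ) + 1) / ((m : ℝ) + 2))))) *
      (∏ k ∈ Finset.range (m + 1), (2 * Real.sin (π * (k + 1) / (m + 2)))) = (2 * π) ^ (m + 1) := by
    rw [← Finset.prod_mul_distrib]
    rw [show (2 * π) ^ (m + 1) = ∏ _k ∈ Finset.range (m + 1), (2 * π) by
      rw [Finset.prod_const, Finset.card_range]]
    refine Finset.prod_congr rfl fun k hk => ?_
    have hs := hsin k hk
    have harg : π * (((k : ℝ) + 1) / ((m : ℝ) + 2)) = π * ((k : ℝ) + 1) / ((m : ℝ) + 2) := by ring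
    rw [harg] at hs ⊢
    field_simp
  rw [prod_two_sin m] at h3
  rw [eq_div_iff hm2.ne', h2]
  exact h3

/-- Writing `n = m + 2` (so that `n ≥ 2`):
`h_n * h_n = ((2π)^(n-1)/n) · f_1^{*(n-1)}`, with `f_1^{*(n-1)}(t) = t^(n-2)/(n-2)!` on `t > 0`. -/
theorem stmt_10 (m : ℕ) :
    conv (hconv m) (hconv m) = fun t : ℝ =>
      ((2 * Real.pi) ^ (m + 1) / ((m : ℝ) + 2)) *
        (if 0 < t then t ^ m / (Nat.factorial m : ℝ) else 0) := by
  have hm2 : (0:ℝ) < (m : ℝ) + 2 := by positivity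
  set α : Fin (m + 1) → ℝ := fun i => ((i : ℕ) + 1 : ℝ) / ((m : ℝ) + 2) with hα_def
  have hα : ∀ i, 0 < α i := fun i => div_pos (by positivity) hm2
  have hS : (∑ i, α i) = ((m : ℝ) + 1) / 2 := by
    rw [hα_def]
    rw [Fin.sum_univ_eq_sum_range (fun k => ((k : ℝ) + 1) / ((m : ℝ) + 2)) (m + 1),
      ← Finset.sum_div, sum_range_real m]
    field_simp
  have hP : (∏ i, Real.Gamma (α i)) =
      ∏ k ∈ Finset.range (m + 1), Real.Gamma (((k : ℝ) + 1) / ((m : ℝ) + 2)) := by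
    rw [hα_def]
    exact Fin.prod_univ_eq_prod_range (fun k => Real.Gamma (((k : ℝ) + 1) / ((m : ℝ) + 2))) (m + 1)
  set P : ℝ := ∏ k ∈ Finset.range (m + 1), Real.Gamma (((k : ℝ) + 1) / ((m : ℝ) + 2)) with hPdef
  have hh : hconv m = fun t => (P / Real.Gamma (((m : ℝ) + 1) / 2)) *
      fp (((m : ℝ) + 1) / 2) t := by
    rw [hconv, multiConv_eq m α hα, hS, hP]
  have hS2 : ((m : ℝ) + 1) / 2 + ((m : ℝ) + 1) / 2 = (m : ℝ) + 1 := by ring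
  have hSpos : (0:ℝ) < ((m : ℝ) + 1) / 2 := by positivity
  have hG : Real.Gamma (((m : ℝ) + 1) / 2) ≠ 0 := (Real.Gamma_pos_of_pos hSpos).ne'
  have hGm : Real.Gamma ((m : ℝ) + 1) = (Nat.factorial m : ℝ) := by
    exact_mod_cast Real.Gamma_nat_eq_factorial m
  rw [hh, conv_const_mul_left, conv_const_mul_right, conv_fp hSpos hSpos]
  funext t
  simp only [hS2, hGm]
  rw [fp]
  by_cases ht : 0 < t
  · rw [if_pos ht, if_pos ht]
    have hrp : t ^ ((m : ℝ) + 1 - 1) = t ^ m := by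
      rw [show (m : ℝ) + 1 - 1 = (m : ℝ) by ring, Real.rpow_natCast]
    rw [hrp]
    have hfac : (Nat.factorial m : ℝ) ≠ 0 := by positivity
    have hsq' : P ^ 2 * ((m : ℝ) + 2) = (2 * π) ^ (m + 1) := by
      rw [hPdef, gamma_prod_sq m]
      field_simp
    field_simp
    linear_combination hsq'
  · rw [if_neg ht, if_neg ht]
    ring
end

section
/- For 0 < α < 1 and integer n ≥ 2, with f_n(t) = t^(n-1) on t > 0, any family satisfying the log-convexity condition (4) of Proposition 1 obeys: (log f_{α+n}(t) − log f_n(t))/α = log t, hence f_{α+n}(t) = t^(α+n-1). -/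
theorem stmt_18 (f : ℝ → ℝ → ℝ)
    (hpos : ∀ α > (0:ℝ), ∀ t > (0:ℝ), 0 < f α t)
    (hnat : ∀ m : ℕ, 1 ≤ m → ∀ t > (0:ℝ), f m t = t ^ ((m : ℝ) - 1))
    (hconvex : ∀ t > (0:ℝ), ConvexOn ℝ (Set.Ioi 0) (fun α => Real.log (f α t)))
    (α : ℝ) (hα0 : 0 < α) (hα1 : α < 1) (n : ℕ) (hn : 2 ≤ n) (t : ℝ) (ht : 0 < t) :
    (Real.log (f (α + n) t) - Real.log (f n t)) / α = Real.log t ∧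
      f (α + n) t = t ^ (α + n - 1) := by
  have hc := hconvex t ht
  have hn2 : (2:ℝ) ≤ (n:ℝ) := by exact_mod_cast hn
  have hmem1 : (n:ℝ) - 1 ∈ Set.Ioi (0:ℝ) := by simp only [Set.mem_Ioi]; linarith
  have hmemn : (n:ℝ) ∈ Set.Ioi (0:ℝ) := by simp only [Set.mem_Ioi]; linarith
  have hmem2 : (n:ℝ) + 1 ∈ Set.Ioi (0:ℝ) := by simp only [Set.mem_Ioi]; linarith
  have gval : ∀ m : ℕ, 1 ≤ m → Real.log (f (m:ℝ) t) = ((m:ℝ) - 1) * Real.log t := by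
    intro m hm
    rw [hnat m hm t ht, Real.log_rpow ht]
  have gn : Real.log (f (n:ℝ) t) = ((n:ℝ) - 1) * Real.log t := gval n (by omega)
  have gn1 : Real.log (f ((n:ℝ) - 1) t) = ((n:ℝ) - 2) * Real.log t := by
    have h := gval (n - 1) (by omega)
    have hcast : ((n - 1 : ℕ) : ℝ) = (n:ℝ) - 1 := by
      have : (1:ℕ) ≤ n := by omega
      push_cast [this]; ring
    rw [hcast] at h
    rw [h]; ring
  have gn2 : Real.log (f ((n:ℝ) + 1) t) = (n:ℝ) * Real.log t := by
    have h := gval (n + 1) (by omega)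
    push_cast at h
    rw [h]; ring
  set L := Real.log t
  set A := Real.log (f (α + n) t) with hA
  have h1 : (Real.log (f (n:ℝ) t) - Real.log (f ((n:ℝ) - 1) t)) / ((n:ℝ) - ((n:ℝ) - 1))
      ≤ (Real.log (f (α + n) t) - Real.log (f (n:ℝ) t)) / (α + n - n) :=
    hc.slope_mono_adjacent hmem1 (by simp only [Set.mem_Ioi]; linarith)
      (by linarith) (by linarith)
  have h2 : (Real.log (f (α + n) t) - Real.log (f (n:ℝ) t)) / (α + n - n)
      ≤ (Real.log (f ((n:ℝ) + 1) t) - Real.log (f (α + n) t)) / ((n:ℝ) + 1 - (α + n)) :=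
    hc.slope_mono_adjacent hmemn hmem2 (by linarith) (by linarith)
  rw [gn, gn1] at h1
  rw [gn, gn2] at h2
  have hsimp : α + (n:ℝ) - n = α := by ring
  rw [hsimp] at h1 h2
  have hd1 : (n:ℝ) - ((n:ℝ) - 1) = 1 := by ring
  rw [hd1] at h1
  have hL1 : L ≤ (A - ((n:ℝ) - 1) * L) / α := by
    have : (((n:ℝ) - 1) * L - ((n:ℝ) - 2) * L) / 1 = L := by ring
    rw [this] at h1; exact h1
  have hL2 : (A - ((n:ℝ) - 1) * L) / α ≤ ((n:ℝ) * L - A) / (1 - α) := by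
    have : (n:ℝ) + 1 - (α + n) = 1 - α := by ring
    rw [this] at h2; exact h2
  have key : A = (α + n - 1) * L := by
    rw [div_le_div_iff₀ hα0 (by linarith)] at hL2
    rw [le_div_iff₀ hα0] at hL1
    nlinarith
  constructor
  · rw [gn, key]
    field_simp
    ring
  · have hfpos : 0 < f (α + n) t := hpos (α + n) (by linarith) t ht
    have : Real.log (f (α + n) t) = Real.log (t ^ (α + n - 1)) := by
      rw [Real.log_rpow ht, ← hA, key]
    exact Real.log_injOn_pos (Set.mem_Ioi.mpr hfpos)
      (Set.mem_Ioi.mpr (Real.rpow_pos_of_pos ht _)) this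
end
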